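/- Let n ≥ 3 and let W be a proper linear subspace of the space of symmetric n×n matrices over K. Then there exist two non-collinear vectors X₁, X₂ ∈ Kⁿ such that W contains no rank-1 matrix with column space equal to K·X₁ and no rank-1 matrix with column space equal to K·X₂. -/

import Mathlib

open Matrix

section Aux

variable {K : Type*} [Field K] {n : ℕ}

private lemma vmv_add_add (X Y : Fin n → K) :
    vecMulVec (X + Y) (X + Y) =
      vecMulVec X X + vecMulVec Y Y + (vecMulVec X Y + vecMulVec Y X) := by
  ext i j
  simp [vecMulVec_apply]
  ring

private lemma polar (φ : Matrix (Fin n) (Fin n) K →ₗ[K] K) (X Y : Fin n → K) :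
    φ (vecMulVec X Y) + φ (vecMulVec Y X) =
      φ (vecMulVec (X + Y) (X + Y)) - φ (vecMulVec X X) - φ (vecMulVec Y Y) := by
  rw [vmv_add_add, map_add, map_add, map_add]
  ring

private lemma vmv_single (i j : Fin n) :
    vecMulVec (Pi.single i (1:K)) (Pi.single j (1:K)) = Matrix.single i j 1 := by
  ext a b
  rw [vecMulVec_apply]
  simp only [Matrix.single, Pi.single_apply, Matrix.of_apply]
  split_ifs <;> simp_all

/-- If a linear functional kills all `X Xᵀ` then it kills every symmetric matrix. -/
private lemma phi_symm_zero (φ : Matrix (Fin n) (Fin n) K →ₗ[K] K)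
    (h0 : ∀ X : Fin n → K, φ (vecMulVec X X) = 0)
    (S : Matrix (Fin n) (Fin n) K) (hS : S.IsSymm) : φ S = 0 := by
  have key : ∀ i j : Fin n, φ (Matrix.single i j (1:K)) + φ (Matrix.single j i 1) = 0 := by
    intro i j
    rw [← vmv_single, ← vmv_single, polar, h0, h0, h0]
    ring
  have hdiag : ∀ i : Fin n, φ (Matrix.single i i (1:K)) = 0 := by
    intro i; rw [← vmv_single, h0]
  conv_lhs => rw [Matrix.matrix_eq_sum_single S]
  rw [map_sum]
  simp_rw [map_sum]
  rw [← Finset.sum_product']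
  refine Finset.sum_ninvolution Prod.swap ?_ ?_ (fun a => Finset.mem_univ _) (fun a => rfl)
  · rintro ⟨i, j⟩
    have hsij : S j i = S i j := by
      have h := hS
      rw [Matrix.IsSymm] at h
      exact congrFun (congrFun h i) j
    simp only [Prod.swap_prod_mk]
    have h1 : Matrix.single i j (S i j) = S i j • Matrix.single i j (1:K) := by
      rw [Matrix.smul_single, smul_eq_mul, mul_one]
    have h2 : Matrix.single j i (S j i) = S i j • Matrix.single j i (1:K) := by
      rw [hsij, Matrix.smul_single, smul_eq_mul, mul_one]
    rw [h1, h2, φ.map_smul, φ.map_smul, smul_eq_mul, smul_eq_mul, ← mul_add, key, mul_zero]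
  · rintro ⟨i, j⟩ hne hswap
    have hij : j = i := congrArg Prod.fst hswap
    apply hne
    subst hij
    have h1 : Matrix.single j j (S j j) = S j j • Matrix.single j j (1:K) := by
      rw [Matrix.smul_single, smul_eq_mul, mul_one]
    rw [h1, φ.map_smul, smul_eq_mul, hdiag, mul_zero]

private lemma indep_aux (X₀ : Fin n → K) (i₀ : Fin n) (hX₀ : X₀ i₀ ≠ 0)
    (h : Fin n → K) (hh0 : h i₀ = 0) (hh : h ≠ 0) (c : K) :
    LinearIndependent K ![X₀, c • X₀ + h] := by
  rw [LinearIndependent.pair_iff]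
  intro s t hst
  have h1 : (s + t * c) • X₀ + t • h = 0 := by
    rw [← hst]; module
  have h2 : (s + t * c) * X₀ i₀ + t * h i₀ = 0 := congrFun h1 i₀
  rw [hh0, mul_zero, add_zero, mul_eq_zero] at h2
  have hstc : s + t * c = 0 := h2.resolve_right hX₀
  rw [hstc, zero_smul, zero_add] at h1
  have ht : t = 0 := by
    rcases smul_eq_zero.1 h1 with ht | hh' 
    · exact ht
    · exact absurd hh' hh
  refine ⟨?_, ht⟩
  rw [ht, zero_mul, add_zero] at hstc
  exact hstc

private lemma exists_second (φ : Matrix (Fin n) (Fin n) K →ₗ[K] K) (hn : 3 ≤ n)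
    (X₀ : Fin n → K) (hX₀ : φ (vecMulVec X₀ X₀) ≠ 0) :
    ∃ Y, φ (vecMulVec Y Y) ≠ 0 ∧ LinearIndependent K ![X₀, Y] := by
  by_contra hcon
  push_neg at hcon
  have hq : ∀ Y, LinearIndependent K ![X₀, Y] → φ (vecMulVec Y Y) = 0 := by
    intro Y hY
    by_contra hne
    exact hcon Y hne hY
  -- X₀ ≠ 0
  obtain ⟨i₀, hi₀⟩ : ∃ i, X₀ i ≠ 0 := by
    by_contra hz
    push_neg at hz
    apply hX₀
    have : X₀ = 0 := funext hz
    rw [this]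
    have : (vecMulVec (0 : Fin n → K) (0 : Fin n → K) : Matrix (Fin n) (Fin n) K) = 0 := by ext a b; simp [vecMulVec_apply]
    rw [this, map_zero]
  -- find two indices different from i₀ and each other
  obtain ⟨i₁, hi₁⟩ : ∃ i : Fin n, i ≠ i₀ := by
    have h2 : 2 ≤ n := by omega
    have : Nontrivial (Fin n) := Fin.nontrivial_iff_two_le.mpr h2
    exact exists_ne i₀
  obtain ⟨i₂, hi₂⟩ : ∃ i : Fin n, i ∉ ({i₀, i₁} : Finset (Fin n)) := by
    by_contra hall
    push_neg at hall
    have hsub : (Finset.univ : Finset (Fin n)) ⊆ {i₀, i₁} := fun x _ => hall x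
    have := Finset.card_le_card hsub
    simp only [Finset.card_univ, Fintype.card_fin] at this
    have h2 : ({i₀, i₁} : Finset (Fin n)).card ≤ 2 := Finset.card_insert_le _ _ |>.trans (by simp)
    omega
  simp only [Finset.mem_insert, Finset.mem_singleton, not_or] at hi₂
  obtain ⟨hi₂₀, hi₂₁⟩ := hi₂
  set h : Fin n → K := Pi.single i₁ 1 with hh_def
  set h' : Fin n → K := Pi.single i₂ 1 with hh'_def
  have hh0 : h i₀ = 0 := Pi.single_eq_of_ne (Ne.symm hi₁) 1
  have hh'0 : h' i₀ = 0 := Pi.single_eq_of_ne (Ne.symm hi₂₀) 1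
  have hhne : h ≠ 0 := by
    intro hz
    have := congrFun hz i₁
    simp [hh_def] at this
  have hh'ne : h' ≠ 0 := by
    intro hz
    have := congrFun hz i₂
    simp [hh'_def] at this
  have hsum0 : (h + h') i₀ = 0 := by simp [hh0, hh'0]
  have hsumne : h + h' ≠ 0 := by
    intro hz
    have := congrFun hz i₁
    simp [hh_def, hh'_def, Pi.single_apply, (show i₁ ≠ i₂ from fun e => hi₂₁ e.symm)] at this
  -- independence facts
  have I1 := indep_aux X₀ i₀ hi₀ h hh0 hhne 0
  have I2 := indep_aux X₀ i₀ hi₀ h' hh'0 hh'ne 0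
  have I3 := indep_aux X₀ i₀ hi₀ (h + h') hsum0 hsumne 0
  have I4 := indep_aux X₀ i₀ hi₀ h hh0 hhne 1
  have I5 := indep_aux X₀ i₀ hi₀ h' hh'0 hh'ne 1
  have I6 := indep_aux X₀ i₀ hi₀ (h + h') hsum0 hsumne 1
  simp only [zero_smul, zero_add, one_smul] at I1 I2 I3 I4 I5 I6
  have q1 : φ (vecMulVec h h) = 0 := hq h I1
  have q2 : φ (vecMulVec h' h') = 0 := hq h' I2
  have q3 : φ (vecMulVec (h + h') (h + h')) = 0 := hq (h + h') I3
  have q4 : φ (vecMulVec (X₀ + h) (X₀ + h)) = 0 := hq _ I4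
  have q5 : φ (vecMulVec (X₀ + h') (X₀ + h')) = 0 := hq _ I5
  have q6 : φ (vecMulVec (X₀ + (h + h')) (X₀ + (h + h'))) = 0 := hq _ I6
  -- expand
  have e4 := polar φ X₀ h
  have e5 := polar φ X₀ h'
  have e6 := polar φ X₀ (h + h')
  rw [q4, q1] at e4
  rw [q5, q2] at e5
  rw [q6, q3] at e6
  -- additivity of the polar form in the second argument
  have hadd : φ (vecMulVec X₀ (h + h')) + φ (vecMulVec (h + h') X₀)
      = (φ (vecMulVec X₀ h) + φ (vecMulVec h X₀))
        + (φ (vecMulVec X₀ h') + φ (vecMulVec h' X₀)) := by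
    have h1 : vecMulVec X₀ (h + h') = vecMulVec X₀ h + vecMulVec X₀ h' := by
      ext a b; simp [vecMulVec_apply]; ring
    have h2 : vecMulVec (h + h') X₀ = vecMulVec h X₀ + vecMulVec h' X₀ := by
      ext a b; simp [vecMulVec_apply]; ring
    rw [h1, h2, map_add, map_add]
    ring
  rw [hadd] at e6
  apply hX₀
  linear_combination e4 + e5 - e6

private lemma no_rank_one (W : Submodule K (Matrix (Fin n) (Fin n) K))
    (hWsym : ∀ M ∈ W, M.IsSymm)
    (φ : Matrix (Fin n) (Fin n) K →ₗ[K] K) (hφW : ∀ M ∈ W, φ M = 0)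
    (X : Fin n → K) (hX : φ (vecMulVec X X) ≠ 0) :
    ∀ M ∈ W, M.rank = 1 → LinearMap.range M.mulVecLin ≠ Submodule.span K {X} := by
  intro M hM hr hrange
  have hXne : X ≠ 0 := by
    intro hz
    apply hX
    rw [hz]
    have : (vecMulVec (0 : Fin n → K) (0 : Fin n → K) : Matrix (Fin n) (Fin n) K) = 0 := by ext a b; simp [vecMulVec_apply]
    rw [this, map_zero]
  obtain ⟨i₀, hi₀⟩ : ∃ i, X i ≠ 0 := by
    by_contra hz; push_neg at hz; exact hXne (funext hz)
  have hcol : ∀ j, ∃ c : K, ∀ i, M i j = c * X i := by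
    intro j
    have hmem : (fun i => M i j) ∈ LinearMap.range M.mulVecLin := by
      refine ⟨Pi.single j 1, ?_⟩
      simp [mulVecLin_apply]
      rfl
    rw [hrange, Submodule.mem_span_singleton] at hmem
    obtain ⟨a, ha⟩ := hmem
    exact ⟨a, fun i => by rw [← congrFun ha i]; simp [mul_comm]⟩
  choose c hc using hcol
  have hsym : ∀ i j, M i j = M j i := by
    intro i j
    have := hWsym M hM
    rw [Matrix.IsSymm] at this
    exact (congrFun (congrFun this i) j).symm
  set l : K := c i₀ * (X i₀)⁻¹ with hl
  have hcj : ∀ j, c j = l * X j := by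
    intro j
    have h2 : c j * X i₀ = c i₀ * X j := by
      rw [← hc j i₀, hsym i₀ j, hc i₀ j]
    field_simp [hl]
    rw [hl, mul_right_comm, eq_mul_inv_iff_mul_eq₀ hi₀]
    linear_combination h2
  have hMeq : M = l • vecMulVec X X := by
    ext i j
    rw [Matrix.smul_apply, vecMulVec_apply, hc j i, hcj j, smul_eq_mul]
    ring
  have hφM : φ M = 0 := hφW M hM
  rw [hMeq, φ.map_smul, smul_eq_mul] at hφM
  have hl0 : l = 0 := by
    rcases mul_eq_zero.1 hφM with h | h
    · exact h
    · exact absurd h hX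
  rw [hl0, zero_smul] at hMeq
  rw [hMeq] at hr
  rw [Matrix.rank_zero] at hr
  exact one_ne_zero hr.symm

end Aux

/-- For a proper subspace `W` of the symmetric `n×n` matrices (`n ≥ 3`), there
exist two non-collinear vectors `X₁, X₂` such that `W` contains no rank-one
matrix with range `K·X₁` and none with range `K·X₂`. -/
theorem proper_subspace_of_sym_misses_two_lines
    (K : Type*) [Field K] (n : ℕ) (hn : 3 ≤ n)
    (W : Submodule K (Matrix (Fin n) (Fin n) K))
    (hWsym : ∀ M ∈ W, M.IsSymm)
    (hproper : ∃ S : Matrix (Fin n) (Fin n) K, S.IsSymm ∧ S ∉ W) :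
    ∃ X₁ X₂ : Fin n → K, LinearIndependent K ![X₁, X₂] ∧
      (∀ M ∈ W, M.rank = 1 →
        LinearMap.range M.mulVecLin ≠ Submodule.span K {X₁}) ∧
      (∀ M ∈ W, M.rank = 1 →
        LinearMap.range M.mulVecLin ≠ Submodule.span K {X₂}) := by
  obtain ⟨S, hSsymm, hSW⟩ := hproper
  have hphi : ∃ φ : Module.Dual K (Matrix (Fin n) (Fin n) K),
      φ ∈ W.dualAnnihilator ∧ φ S ≠ 0 := by
    by_contra hcon
    push_neg at hcon
    exact hSW ((Subspace.forall_mem_dualAnnihilator_apply_eq_zero_iff W S).1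
      (fun ψ hψ => hcon ψ hψ))
  obtain ⟨φ, hφann, hφS⟩ := hphi
  have hφW : ∀ M ∈ W, φ M = 0 := (Submodule.mem_dualAnnihilator φ).1 hφann
  have hex : ∃ X : Fin n → K, φ (vecMulVec X X) ≠ 0 := by
    by_contra hz
    push_neg at hz
    exact hφS (phi_symm_zero φ hz S hSsymm)
  obtain ⟨X₀, hX₀⟩ := hex
  obtain ⟨Y, hY, hind⟩ := exists_second φ hn X₀ hX₀
  exact ⟨X₀, Y, hind,
    no_rank_one W hWsym φ hφW X₀ hX₀,
    no_rank_one W hWsym φ hφW Y hY⟩
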